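/- The probability density function f(q) = C ∫_0^∞ s^ν e^{−νs²/2} (∫_{−∞}^∞ e^{−((z+qs)² + z²)/2} dz) ds, where C = (4√(2π)(ν/2)^{ν/2})/(Γ(ν/2)·√(2π)·2π), equals (√2 · ν^{ν/2} · Γ((ν+1)/2)) / (√π · Γ(ν/2) · (ν + q²/2)^{(ν+1)/2}) for every q ≥ 0 and every positive integer ν. -/
import Mathlib
open Real MeasureTheory

lemma inner_gauss (c : ℝ) :
    ∫ z : ℝ, Real.exp (-(((z + c) ^ 2 + z ^ 2) / 2))
      = Real.exp (-c ^ 2 / 4) * Real.sqrt π := by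
  have h : ∀ z : ℝ, Real.exp (-(((z + c) ^ 2 + z ^ 2) / 2))
      = Real.exp (-c ^ 2 / 4) * Real.exp (-1 * (z + c / 2) ^ 2) := by
    intro z
    rw [← Real.exp_add]
    ring_nf
  simp_rw [h, integral_const_mul]
  rw [integral_add_right_eq_self (fun x : ℝ => Real.exp (-1 * x ^ 2)) (c / 2),
    integral_gaussian]
  norm_num

theorem studentized_range_density_k2
    (ν : ℕ) (hν : 0 < ν) (q : ℝ) (hq : 0 ≤ q) :
    (4 * Real.sqrt (2 * π) * ((ν : ℝ) / 2) ^ ((ν : ℝ) / 2) /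
        (Real.Gamma ((ν : ℝ) / 2) * Real.sqrt (2 * π) * (2 * π))) *
      ∫ s in Set.Ioi (0 : ℝ),
        s ^ (ν : ℕ) * Real.exp (-((ν : ℝ) * s ^ 2) / 2) *
          ∫ z : ℝ, Real.exp (-(((z + q * s) ^ 2 + z ^ 2) / 2))
    = Real.sqrt 2 * (ν : ℝ) ^ ((ν : ℝ) / 2) * Real.Gamma (((ν : ℝ) + 1) / 2) /
        (Real.sqrt π * Real.Gamma ((ν : ℝ) / 2) *
          ((ν : ℝ) + q ^ 2 / 2) ^ (((ν : ℝ) + 1) / 2)) := by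
  have hν0 : (0 : ℝ) < (ν : ℝ) := Nat.cast_pos.mpr hν
  have hA0 : (0 : ℝ) < (ν : ℝ) + q ^ 2 / 2 := by positivity
  have hb : (0 : ℝ) < ((ν : ℝ) + q ^ 2 / 2) / 2 := by positivity
  -- inner integral
  simp_rw [inner_gauss]
  -- rewrite the outer integrand into rpow form
  have h2 : ∀ s ∈ Set.Ioi (0 : ℝ),
      s ^ (ν : ℕ) * Real.exp (-((ν : ℝ) * s ^ 2) / 2) *
          (Real.exp (-(q * s) ^ 2 / 4) * Real.sqrt π)
        = Real.sqrt π *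
          (s ^ ((ν : ℝ)) * Real.exp (-(((ν : ℝ) + q ^ 2 / 2) / 2) * s ^ (2 : ℝ))) := by
    intro s hs
    have hs0 : (0 : ℝ) < s := hs
    have he : Real.exp (-((ν : ℝ) * s ^ 2) / 2) * Real.exp (-(q * s) ^ 2 / 4)
        = Real.exp (-(((ν : ℝ) + q ^ 2 / 2) / 2) * s ^ 2) := by
      rw [← Real.exp_add]; congr 1; ring
    rw [← Real.rpow_natCast s ν, show s ^ (2 : ℝ) = s ^ (2 : ℕ) by
      rw [← Real.rpow_natCast s 2]; norm_num, ← he]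
    ring
  rw [setIntegral_congr_fun measurableSet_Ioi h2, integral_const_mul,
    integral_rpow_mul_exp_neg_mul_rpow two_pos (by linarith : (-1 : ℝ) < (ν : ℝ)) hb]
  -- algebra
  have key : (((ν : ℝ) + q ^ 2 / 2) / 2) ^ (-((ν : ℝ) + 1) / 2)
      = 2 ^ ((ν : ℝ) / 2) * Real.sqrt 2 / ((ν : ℝ) + q ^ 2 / 2) ^ (((ν : ℝ) + 1) / 2) := by
    rw [show -((ν : ℝ) + 1) / 2 = -(((ν : ℝ) + 1) / 2) by ring, Real.rpow_neg hb.le,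
      Real.div_rpow hA0.le (by norm_num : (0:ℝ) ≤ 2),
      show ((ν : ℝ) + 1) / 2 = (ν : ℝ) / 2 + 1 / 2 by ring,
      Real.rpow_add two_pos, ← Real.sqrt_eq_rpow]
    rw [Real.rpow_add hA0]
    field_simp
  have hnu2 : ((ν : ℝ) / 2) ^ ((ν : ℝ) / 2)
      = (ν : ℝ) ^ ((ν : ℝ) / 2) / 2 ^ ((ν : ℝ) / 2) :=
    Real.div_rpow hν0.le (by norm_num) _
  rw [key, hnu2]
  set c := Real.sqrt (2 * π) with hc
  have hc0 : c ≠ 0 := ne_of_gt (Real.sqrt_pos.mpr (by positivity))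
  have hΓ : Real.Gamma ((ν : ℝ) / 2) ≠ 0 := ne_of_gt (Real.Gamma_pos_of_pos (by positivity))
  have hsπ : Real.sqrt π ≠ 0 := ne_of_gt (Real.sqrt_pos.mpr Real.pi_pos)
  have h2ν : (2 : ℝ) ^ ((ν : ℝ) / 2) ≠ 0 := ne_of_gt (Real.rpow_pos_of_pos two_pos _)
  have hAe : ((ν : ℝ) + q ^ 2 / 2) ^ (((ν : ℝ) + 1) / 2) ≠ 0 :=
    ne_of_gt (Real.rpow_pos_of_pos hA0 _)
  field_simp
  conv_rhs => rw [show (π : ℝ) = Real.sqrt π * Real.sqrt π from (Real.mul_self_sqrt Real.pi_pos.le).symm]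
  ring
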